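/- Let a, b, β be real with β > 0, ε ∈ (0,1), δ > 0, and parameters 0 < α < 1, γ, λ > 0 with (a+b)² = δ², ab = -(αγλ - δ)(αγλ - αδ)/(1-α)². If (δ²/ε²)(1-ε)(1-α)² + αγλδ(1+α) - αδ² < α²γ²λ² + (β/2)(2-ε)²(1-α)², then p(1-ε) = 2δ²(1-ε) - (2ε²/(1-α)²)((αγλ-δ)(αγλ-αδ) + 2β(1-α)²) + βε³(4-ε) < 0, where p(z) = 2(az+b)(bz+a) - β(1-z²)². -/

import Mathlib

theorem stmt_12 (a b β δ ε α γ lam : ℝ) (hβ : 0 < β)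
    (hε : 0 < ε) (hε1 : ε < 1) (hδ : 0 < δ)
    (hα : 0 < α) (hα1 : α < 1) (hγ : 0 < γ) (hlam : 0 < lam)
    (hab1 : (a + b)^2 = δ^2)
    (hab2 : a*b = -((α*γ*lam - δ)*(α*γ*lam - α*δ)) / (1-α)^2)
    (hcond : (δ^2/ε^2)*(1-ε)*(1-α)^2 + α*γ*lam*δ*(1+α) - α*δ^2
        < α^2*γ^2*lam^2 + (β/2)*(2-ε)^2*(1-α)^2) :
    2*(a*(1-ε)+b)*(b*(1-ε)+a) - β*(1-(1-ε)^2)^2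
        = 2*δ^2*(1-ε)
            - (2*ε^2/(1-α)^2)*((α*γ*lam - δ)*(α*γ*lam - α*δ) + 2*β*(1-α)^2)
            + β*ε^3*(4-ε) ∧
    2*(a*(1-ε)+b)*(b*(1-ε)+a) - β*(1-(1-ε)^2)^2 < 0 := by
  have h1α : (1-α) ≠ 0 := by intro h; nlinarith
  have hεne : ε ≠ 0 := ne_of_gt hε
  have hK : a*b * (1-α)^2 = -((α*γ*lam - δ)*(α*γ*lam - α*δ)) := by
    field_simp at hab2; linarith
  have key : 2*(a*(1-ε)+b)*(b*(1-ε)+a) - β*(1-(1-ε)^2)^2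
      = 2*δ^2*(1-ε) + 2*a*b*ε^2 - β*ε^2*(2-ε)^2 := by
    linear_combination 2*(1-ε)*hab1
  constructor
  · rw [key]; field_simp; linear_combination (2*ε^2)*hK
  · rw [key]
    have hcond' := mul_lt_mul_of_pos_left hcond (show (0:ℝ) < 2*ε^2 by positivity)
    have h2 : (2*ε^2) * ((δ^2/ε^2)*(1-ε)*(1-α)^2) = 2*δ^2*(1-ε)*(1-α)^2 := by
      field_simp
    have hpos : 0 < (1-α)^2 := by positivity
    nlinarith [hK, hcond', h2, hpos]
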